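/- Let V be the complex vector space of polynomials on n×n complex symmetric matrices spanned by all minors of the matrix x (including the constant 1 and det(x)). Then V is invariant under every transformation of the form p(x) ↦ p(c + a x aᵗ) for a ∈ GL_n(ℂ) and c symmetric, and under p(x) ↦ det(x) p(-x⁻¹). -/

import Mathlib

open Matrix Finset

noncomputable section

/-- The `(I, J)`-minor of a square matrix (rows `I`, columns `J` in increasing order). -/
def fminor {n : ℕ} (x : Matrix (Fin n) (Fin n) ℂ)
    (I J : Finset (Fin n)) (h : I.card = J.card) : ℂ :=
  Matrix.det (Matrix.of fun a b : Fin I.card =>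
    x ((I.orderIsoOfFin rfl a : Fin n)) ((J.orderIsoOfFin h.symm b : Fin n)))

/-- The space `V` of polynomial functions on `n × n` complex matrices spanned by all minors of
the matrix `x` (including the constant `1` and `det x`). -/
def minorSpan (n : ℕ) : Submodule ℂ (Matrix (Fin n) (Fin n) ℂ → ℂ) :=
  Submodule.span ℂ
    {f | ∃ (I J : Finset (Fin n)) (h : I.card = J.card), f = fun x => fminor x I J h}

namespace MinorAux

lemma image_orderIso {n k : ℕ} (T : Finset (Fin n)) (h : T.card = k) (σ : Equiv.Perm (Fin k)) :
    Finset.image (fun a => T.orderEmbOfFin h (σ a)) univ = T := by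
  ext t
  simp only [Finset.mem_image, Finset.mem_univ, true_and]
  constructor
  · rintro ⟨a, rfl⟩; exact Finset.orderEmbOfFin_mem T h (σ a)
  · intro ht
    refine ⟨σ⁻¹ ((T.orderIsoOfFin h).symm ⟨t, ht⟩), ?_⟩
    simp [← Finset.coe_orderIsoOfFin_apply]

lemma det_eq_sum_perm {k : ℕ} (M : Matrix (Fin k) (Fin k) ℂ) :
    M.det = ∑ σ : Equiv.Perm (Fin k), ((Equiv.Perm.sign σ : ℤ) : ℂ) * ∏ a, M a (σ a) := by
  rw [← Matrix.det_transpose, Matrix.det_apply']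
  simp [Matrix.transpose_apply]

/-- The standard basis vectors of `ℂⁿ`, as plain functions. -/
def ee (n : ℕ) (p : Fin n) : Fin n → ℂ := fun j => if p = j then 1 else 0

/-- Composing an alternating form with a selection of rows of `x` gives a member of the
span of minors. -/
lemma alt_mem {n : ℕ} (S : Finset (Fin n))
    (Ψ : (Fin n → ℂ) [⋀^Fin S.card]→ₗ[ℂ] ℂ) :
    (fun x : Matrix (Fin n) (Fin n) ℂ =>
      Ψ fun a => x ((S.orderIsoOfFin rfl a : Fin n))) ∈ minorSpan n := by
  classical
  have key : ∀ x : Matrix (Fin n) (Fin n) ℂ,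
      Ψ (fun a => x ((S.orderIsoOfFin rfl a : Fin n)))
        = ∑ T : {T : Finset (Fin n) // T.card = S.card},
            Ψ (fun b => ee n ((T.1.orderIsoOfFin T.2 b : Fin n)))
              * fminor x S T.1 T.2.symm := by
    intro x
    set y : Fin S.card → (Fin n → ℂ) := fun a => x ((S.orderIsoOfFin rfl a : Fin n)) with hy
    have expand : Ψ y = ∑ φ : Fin S.card → Fin n,
        (∏ a, y a (φ a)) • Ψ (fun a => ee n (φ a)) := by
      have h1 : Ψ y = Ψ (fun a => ∑ p, y a p • ee n p) := by
        congr 1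
        funext a
        exact pi_eq_sum_univ (y a)
      rw [h1]
      rw [show Ψ (fun a => ∑ p, y a p • ee n p)
        = Ψ.toMultilinearMap (fun a => ∑ p, y a p • ee n p) from rfl]
      rw [Ψ.toMultilinearMap.map_sum (fun a p => y a p • ee n p)]
      refine Finset.sum_congr rfl fun φ _ => ?_
      exact Ψ.toMultilinearMap.map_smul_univ (fun a => y a (φ a)) (fun a => ee n (φ a))
    have zero_noninj : ∀ φ : Fin S.card → Fin n, ¬ Function.Injective φ →
        (∏ a, y a (φ a)) • Ψ (fun a => ee n (φ a)) = 0 := by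
      intro φ hφ
      obtain ⟨a, b, hab, hne⟩ := Function.not_injective_iff.mp hφ
      rw [Ψ.map_eq_zero_of_eq _ (show ee n (φ a) = ee n (φ b) by rw [hab]) hne, smul_zero]
    have hfil : (∑ φ : Fin S.card → Fin n, (∏ a, y a (φ a)) • Ψ (fun a => ee n (φ a)))
        = ∑ φ ∈ univ.filter (fun φ : Fin S.card → Fin n => Function.Injective φ),
            (∏ a, y a (φ a)) • Ψ (fun a => ee n (φ a)) :=
      (Finset.sum_subset (filter_subset _ _)
        (fun φ _ hφ => zero_noninj φ (by simpa using hφ))).symm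
    have hbij : (∑ P : {T : Finset (Fin n) // T.card = S.card} × Equiv.Perm (Fin S.card),
          (∏ a, y a ((P.1.1.orderIsoOfFin P.1.2 (P.2 a) : Fin n)))
            • Ψ (fun a => ee n ((P.1.1.orderIsoOfFin P.1.2 (P.2 a) : Fin n))))
        = ∑ φ ∈ univ.filter (fun φ : Fin S.card → Fin n => Function.Injective φ),
            (∏ a, y a (φ a)) • Ψ (fun a => ee n (φ a)) := by
      refine Finset.sum_bij
        (fun (P : {T : Finset (Fin n) // T.card = S.card} × Equiv.Perm (Fin S.card)) _ =>
          (fun a => ((P.1.1.orderIsoOfFin P.1.2 (P.2 a) : Fin n)))) ?_ ?_ ?_ ?_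
      · intro P _
        simp only [Finset.mem_filter, Finset.mem_univ, true_and]
        intro a b hab
        exact P.2.injective ((P.1.1.orderIsoOfFin P.1.2).injective (Subtype.coe_injective hab))
      · intro P1 hP1 P2 hP2 hEq
        clear hP1 hP2
        obtain ⟨⟨T₁, h₁⟩, σ₁⟩ := P1
        obtain ⟨⟨T₂, h₂⟩, σ₂⟩ := P2
        have hT : T₁ = T₂ := by
          have h3 := congrArg (fun φ : Fin S.card → Fin n => Finset.image φ univ) hEq
          simpa [image_orderIso] using h3
        subst hT
        have hσ : σ₁ = σ₂ := by
          ext a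
          have h4 := congrFun hEq a
          have h5 : (T₁.orderIsoOfFin h₁) (σ₁ a) = (T₁.orderIsoOfFin h₁) (σ₂ a) :=
            Subtype.coe_injective h4
          exact congrArg Fin.val ((T₁.orderIsoOfFin h₁).injective h5)
        subst hσ
        rfl
      · intro φ hφ
        have hinj : Function.Injective φ := by simpa using hφ
        have hT : (Finset.image φ univ).card = S.card := by
          rw [Finset.card_image_of_injective _ hinj, card_univ, Fintype.card_fin]
        have hmem : ∀ a, φ a ∈ Finset.image φ univ :=
          fun a => mem_image_of_mem φ (mem_univ a)
        have hbij : Function.Bijective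
            (fun a => ((Finset.image φ univ).orderIsoOfFin hT).symm ⟨φ a, hmem a⟩) := by
          apply Finite.injective_iff_bijective.mp
          intro a b hab
          apply hinj
          have h6 := congrArg ((Finset.image φ univ).orderIsoOfFin hT) hab
          simpa using congrArg Subtype.val h6
        refine ⟨⟨⟨Finset.image φ univ, hT⟩, Equiv.ofBijective _ hbij⟩, mem_univ _, ?_⟩
        funext a
        simp [Equiv.ofBijective_apply]
      · intro P _
        rfl
    rw [expand, hfil, ← hbij, Fintype.sum_prod_type]
    refine Finset.sum_congr rfl fun T _ => ?_
    have hdet : fminor x S T.1 T.2.symm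
        = ∑ σ : Equiv.Perm (Fin S.card), ((Equiv.Perm.sign σ : ℤ) : ℂ)
            * ∏ a, y a ((T.1.orderIsoOfFin T.2 (σ a) : Fin n)) := by
      have h7 := det_eq_sum_perm
        (Matrix.of fun a b : Fin S.card => y a ((T.1.orderIsoOfFin T.2 b : Fin n)))
      exact h7
    rw [hdet, Finset.mul_sum]
    refine Finset.sum_congr rfl fun σ _ => ?_
    have h8 : Ψ (fun a => ee n ((T.1.orderIsoOfFin T.2 (σ a) : Fin n)))
        = Equiv.Perm.sign σ • Ψ (fun b => ee n ((T.1.orderIsoOfFin T.2 b : Fin n))) :=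
      Ψ.map_perm (fun b => ee n ((T.1.orderIsoOfFin T.2 b : Fin n))) σ
    rw [h8]
    simp only [Units.smul_def, zsmul_eq_mul, smul_eq_mul]
    ring
  have hfun : (fun x : Matrix (Fin n) (Fin n) ℂ =>
      Ψ fun a => x ((S.orderIsoOfFin rfl a : Fin n)))
      = ∑ T : {T : Finset (Fin n) // T.card = S.card},
          Ψ (fun b => ee n ((T.1.orderIsoOfFin T.2 b : Fin n)))
            • (fun x : Matrix (Fin n) (Fin n) ℂ => fminor x S T.1 T.2.symm) := by
    funext x
    rw [key x]
    simp [Finset.sum_apply, smul_eq_mul]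
  rw [hfun]
  exact Submodule.sum_mem _ fun T _ => Submodule.smul_mem _ _
    (Submodule.subset_span ⟨S, T.1, T.2.symm, rfl⟩)

/-- The master lemma: the determinant of a matrix whose first `n` rows are
`u i + ∑ p, x i p • v p` and whose remaining rows are constant, as a function of `x`,
lies in the span of the minors of `x`. -/
lemma master {n k : ℕ} (u v : Fin n → (Fin n ⊕ Fin k) → ℂ)
    (w : Fin k → (Fin n ⊕ Fin k) → ℂ) :
    (fun x : Matrix (Fin n) (Fin n) ℂ =>
      (Matrix.of (Sum.elim (fun i => u i + ∑ p, x i p • v p) w)).det) ∈ minorSpan n := by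
  classical
  set A : (Fin n ⊕ Fin k) → Finset Bool :=
    Sum.elim (fun _ => (univ : Finset Bool)) (fun _ => ({true} : Finset Bool)) with hA
  have expand : ∀ x : Matrix (Fin n) (Fin n) ℂ,
      (Matrix.of (Sum.elim (fun i => u i + ∑ p, x i p • v p) w)).det
        = ∑ c : Fin n → Bool,
            (Matrix.of (Sum.elim
              (fun i => if c i then ∑ p, x i p • v p else u i) w)).det := by
    intro x
    set g : ∀ _ : Fin n ⊕ Fin k, Bool → ((Fin n ⊕ Fin k) → ℂ) :=
      fun s b => Sum.elim (fun i => if b then ∑ p, x i p • v p else u i) w s with hg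
    have h0 : (Matrix.of (Sum.elim (fun i => u i + ∑ p, x i p • v p) w)
          : Matrix (Fin n ⊕ Fin k) (Fin n ⊕ Fin k) ℂ)
        = fun s => ∑ b ∈ A s, g s b := by
      funext s
      rcases s with i | j
      · show u i + ∑ p, x i p • v p = ∑ b : Bool, g (Sum.inl i) b
        rw [Fintype.sum_bool]
        show _ = (∑ p, x i p • v p) + u i
        rw [add_comm]
      · show w j = ∑ b ∈ ({true} : Finset Bool), g (Sum.inr j) b
        rw [Finset.sum_singleton]
        rfl
    have h1 : (Matrix.of (Sum.elim (fun i => u i + ∑ p, x i p • v p) w)).det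
        = Matrix.detRowAlternating.toMultilinearMap (fun s => ∑ b ∈ A s, g s b) := by
      rw [← h0]; rfl
    rw [h1, Matrix.detRowAlternating.toMultilinearMap.map_sum_finset g A]
    refine (Finset.sum_bij (fun (c : Fin n → Bool) _ => Sum.elim c (fun _ => true))
      ?_ ?_ ?_ ?_).symm
    · intro c _
      rw [Fintype.mem_piFinset]
      rintro (i | j)
      · exact mem_univ _
      · exact Finset.mem_singleton_self _
    · intro c₁ _ c₂ _ h
      funext i
      exact congrFun h (Sum.inl i)
    · intro r hr
      refine ⟨fun i => r (Sum.inl i), mem_univ _, ?_⟩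
      funext s
      rcases s with i | j
      · rfl
      · exact (Finset.mem_singleton.mp ((Fintype.mem_piFinset.mp hr) (Sum.inr j))).symm
    · intro c _
      show (Matrix.of (Sum.elim (fun i => if c i then ∑ p, x i p • v p else u i) w)).det
        = Matrix.detRowAlternating.toMultilinearMap (fun s => g s (Sum.elim c (fun _ => true) s))
      congr 1
      funext s
      rcases s with i | j <;> rfl
  have main : ∀ c : Fin n → Bool,
      (fun x : Matrix (Fin n) (Fin n) ℂ =>
        (Matrix.of (Sum.elim (fun i => if c i then ∑ p, x i p • v p else u i) w)).det)
        ∈ minorSpan n := by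
    intro c
    set S : Finset (Fin n) := univ.filter (fun i => c i = true) with hS
    set R : (Fin S.card → (Fin n → ℂ)) → ((Fin n ⊕ Fin k) → (Fin n ⊕ Fin k) → ℂ) :=
      fun y => Sum.elim
        (fun i => if hi : i ∈ S then ∑ p, y ((S.orderIsoOfFin rfl).symm ⟨i, hi⟩) p • v p
          else u i) w with hR
    have hrow : ∀ (y : Fin S.card → (Fin n → ℂ)) (a : Fin S.card),
        R y (Sum.inl ((S.orderIsoOfFin rfl a : Fin n))) = ∑ p, y a p • v p := by
      intro y a
      have hmem : ((S.orderIsoOfFin rfl a : Fin n)) ∈ S := (S.orderIsoOfFin rfl a).2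
      show (if hi : ((S.orderIsoOfFin rfl a : Fin n)) ∈ S
          then ∑ p, y ((S.orderIsoOfFin rfl).symm ⟨_, hi⟩) p • v p else u _) = _
      rw [dif_pos hmem]
      have : (S.orderIsoOfFin rfl).symm ⟨(S.orderIsoOfFin rfl a : Fin n), hmem⟩ = a := by
        rw [show (⟨((S.orderIsoOfFin rfl a : Fin n)), hmem⟩ : {u // u ∈ S})
          = S.orderIsoOfFin rfl a from Subtype.ext rfl, OrderIso.symm_apply_apply]
      rw [this]
    have hupd : ∀ (inst : DecidableEq (Fin S.card)) (y : Fin S.card → (Fin n → ℂ))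
        (a : Fin S.card) (z : Fin n → ℂ),
        R (@Function.update _ _ inst y a z)
          = Function.update (R y) (Sum.inl ((S.orderIsoOfFin rfl a : Fin n)))
              (∑ p, z p • v p) := by
      intro inst y a z
      funext s
      rcases s with i | j
      · by_cases hia : i = ((S.orderIsoOfFin rfl a : Fin n))
        · subst hia
          rw [Function.update_self]
          rw [hrow (@Function.update _ _ inst y a z) a]
          rw [Function.update_self]
        · rw [Function.update_of_ne (by simpa using hia)]
          show (if hi : i ∈ S then _ else u i) = (if hi : i ∈ S then _ else u i)
          by_cases hiS : i ∈ S
          · rw [dif_pos hiS, dif_pos hiS]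
            have hne : (S.orderIsoOfFin rfl).symm ⟨i, hiS⟩ ≠ a := by
              intro hcon
              apply hia
              have := congrArg (S.orderIsoOfFin rfl) hcon
              rw [OrderIso.apply_symm_apply] at this
              exact (congrArg Subtype.val this).symm ▸ rfl
            rw [Function.update_of_ne hne]
          · rw [dif_neg hiS, dif_neg hiS]
      · rw [Function.update_of_ne (by simp)]
        rfl
    set Ψ : (Fin n → ℂ) [⋀^Fin S.card]→ₗ[ℂ] ℂ :=
      { toFun := fun y => (Matrix.of (R y)).det
        map_update_add' := by
          intro inst y a z₁ z₂
          show (Matrix.of (R (Function.update y a (z₁ + z₂)))).det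
            = (Matrix.of (R (Function.update y a z₁))).det
              + (Matrix.of (R (Function.update y a z₂))).det
          rw [hupd inst y a (z₁ + z₂), hupd inst y a z₁, hupd inst y a z₂]
          have hsum : (∑ p, (z₁ + z₂) p • v p)
              = (∑ p, z₁ p • v p) + (∑ p, z₂ p • v p) := by
            rw [← Finset.sum_add_distrib]
            refine Finset.sum_congr rfl fun p _ => ?_
            rw [Pi.add_apply, add_smul]
          rw [hsum]
          exact Matrix.det_updateRow_add (Matrix.of (R y)) _ _ _
        map_update_smul' := by
          intro inst y a r z
          show (Matrix.of (R (Function.update y a (r • z)))).det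
            = r • (Matrix.of (R (Function.update y a z))).det
          rw [hupd inst y a (r • z), hupd inst y a z]
          have hsum : (∑ p, (r • z) p • v p) = r • (∑ p, z p • v p) := by
            rw [Finset.smul_sum]
            refine Finset.sum_congr rfl fun p _ => ?_
            rw [Pi.smul_apply, smul_assoc]
          rw [hsum]
          exact Matrix.det_updateRow_smul (Matrix.of (R y)) _ _ _
        map_eq_zero_of_eq' := by
          intro y a b hab hne
          refine Matrix.det_zero_of_row_eq
            (i := Sum.inl ((S.orderIsoOfFin rfl a : Fin n)))
            (j := Sum.inl ((S.orderIsoOfFin rfl b : Fin n))) ?_ ?_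
          · simp only [ne_eq, Sum.inl.injEq]
            intro hcon
            exact hne ((S.orderIsoOfFin rfl).injective (Subtype.coe_injective hcon))
          · show R y (Sum.inl ((S.orderIsoOfFin rfl a : Fin n)))
              = R y (Sum.inl ((S.orderIsoOfFin rfl b : Fin n)))
            rw [hrow y a, hrow y b, hab] }
    have hfin : (fun x : Matrix (Fin n) (Fin n) ℂ =>
        (Matrix.of (Sum.elim (fun i => if c i then ∑ p, x i p • v p else u i) w)).det)
        = fun x => Ψ (fun a => x ((S.orderIsoOfFin rfl a : Fin n))) := by
      funext x
      show _ = (Matrix.of (R (fun a => x ((S.orderIsoOfFin rfl a : Fin n))))).det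
      congr 1
      funext s
      rcases s with i | j
      · show (if c i = true then ∑ p, x i p • v p else u i)
          = (if hi : i ∈ S then _ else u i)
        by_cases hiS : i ∈ S
        · have hc : c i = true := by simpa [hS] using hiS
          rw [if_pos hc, dif_pos hiS]
          refine Finset.sum_congr rfl fun p _ => ?_
          have hcoe : ((S.orderIsoOfFin rfl ((S.orderIsoOfFin rfl).symm ⟨i, hiS⟩) : Fin n)) = i := by
            rw [OrderIso.apply_symm_apply]
          show x i p • v p
            = x ((S.orderIsoOfFin rfl ((S.orderIsoOfFin rfl).symm ⟨i, hiS⟩) : Fin n)) p • v p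
          rw [hcoe]
        · have hc : ¬ c i = true := by simpa [hS] using hiS
          rw [if_neg hc, dif_neg hiS]
      · rfl
    rw [hfin]
    exact alt_mem S Ψ
  have hfun : (fun x : Matrix (Fin n) (Fin n) ℂ =>
      (Matrix.of (Sum.elim (fun i => u i + ∑ p, x i p • v p) w)).det)
      = ∑ c : Fin n → Bool, (fun x : Matrix (Fin n) (Fin n) ℂ =>
          (Matrix.of (Sum.elim (fun i => if c i then ∑ p, x i p • v p else u i) w)).det) := by
    funext x
    rw [expand x, Finset.sum_apply]
  rw [hfun]
  exact Submodule.sum_mem _ fun c _ => main c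

/-- Any determinant of the form `det (C + A x B)` lies in the span of minors of `x`. -/
lemma detCAB {n k : ℕ} (C : Matrix (Fin k) (Fin k) ℂ) (A : Matrix (Fin k) (Fin n) ℂ)
    (B : Matrix (Fin n) (Fin k) ℂ) :
    (fun x : Matrix (Fin n) (Fin n) ℂ => (C + A * x * B).det) ∈ minorSpan n := by
  classical
  have hkey : (fun x : Matrix (Fin n) (Fin n) ℂ => (C + A * x * B).det)
      = fun x => (Matrix.of (Sum.elim
          (fun i => (Sum.elim (fun i' => if i = i' then (1:ℂ) else 0) (fun _ => (0:ℂ)))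
            + ∑ p, x i p • (Sum.elim (fun _ => (0:ℂ)) (fun j => -B p j)))
          (fun j => Sum.elim (fun i' => A j i') (fun j' => C j j')))).det := by
    funext x
    have hblock : (Matrix.of (Sum.elim
          (fun i => (Sum.elim (fun i' => if i = i' then (1:ℂ) else 0) (fun _ => (0:ℂ)))
            + ∑ p, x i p • (Sum.elim (fun _ => (0:ℂ)) (fun j => -B p j)))
          (fun j => Sum.elim (fun i' => A j i') (fun j' => C j j')))
          : Matrix (Fin n ⊕ Fin k) (Fin n ⊕ Fin k) ℂ)
        = Matrix.fromBlocks 1 (-(x * B)) A C := by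
      ext s t
      rcases s with i | j <;> rcases t with i' | j' <;>
        simp [Matrix.fromBlocks, Matrix.one_apply, Matrix.mul_apply, Finset.sum_apply,
          Finset.sum_neg_distrib, mul_neg]
    rw [hblock, Matrix.det_fromBlocks_one₁₁]
    rw [Matrix.mul_neg, sub_neg_eq_add, Matrix.mul_assoc]
  rw [hkey]
  exact master _ _ _

lemma part1gen {n : ℕ} (a c : Matrix (Fin n) (Fin n) ℂ) (I J : Finset (Fin n))
    (h : I.card = J.card) :
    (fun x : Matrix (Fin n) (Fin n) ℂ => fminor (c + a * x * aᵀ) I J h) ∈ minorSpan n := by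
  have hkey : (fun x : Matrix (Fin n) (Fin n) ℂ => fminor (c + a * x * aᵀ) I J h)
      = fun x => ((Matrix.of fun α β : Fin I.card =>
            c ((I.orderIsoOfFin rfl α : Fin n)) ((J.orderIsoOfFin h.symm β : Fin n)))
          + (Matrix.of fun (α : Fin I.card) (p : Fin n) => a ((I.orderIsoOfFin rfl α : Fin n)) p)
            * x
            * (Matrix.of fun (p : Fin n) (β : Fin I.card) =>
                a ((J.orderIsoOfFin h.symm β : Fin n)) p)).det := by
    funext x
    show Matrix.det _ = Matrix.det _
    congr 1
  rw [hkey]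
  exact detCAB _ _ _

lemma part2gen {n : ℕ} (I J : Finset (Fin n)) (h : I.card = J.card) :
    ∃ q ∈ minorSpan n, ∀ x : Matrix (Fin n) (Fin n) ℂ, IsUnit x.det →
      x.det * fminor (-x⁻¹) I J h = q x := by
  classical
  set A : Matrix (Fin I.card) (Fin n) ℂ :=
    Matrix.of fun α p => if p = ((I.orderIsoOfFin rfl α : Fin n)) then (1:ℂ) else 0 with hA
  set B : Matrix (Fin n) (Fin I.card) ℂ :=
    Matrix.of fun p β => if p = ((J.orderIsoOfFin h.symm β : Fin n)) then (1:ℂ) else 0 with hB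
  refine ⟨fun x => (Matrix.fromBlocks x B A 0).det, ?_, ?_⟩
  · have hkey : (fun x : Matrix (Fin n) (Fin n) ℂ => (Matrix.fromBlocks x B A 0).det)
        = fun x => (Matrix.of (Sum.elim
            (fun i => (Sum.elim (fun _ => (0:ℂ)) (fun β => B i β))
              + ∑ p, x i p • (Sum.elim (fun i' => if p = i' then (1:ℂ) else 0) (fun _ => (0:ℂ))))
            (fun j => Sum.elim (fun i' => A j i') (fun _ => (0:ℂ))))).det := by
      funext x
      congr 1
      ext s t
      rcases s with i | j <;> rcases t with i' | j' <;>
        simp [Matrix.fromBlocks, Finset.sum_apply, mul_ite, mul_one, mul_zero,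
          Finset.sum_ite_eq']
    rw [hkey]
    exact master _ _ _
  · intro x hdet
    haveI := x.invertibleOfIsUnitDet hdet
    show x.det * fminor (-x⁻¹) I J h = (Matrix.fromBlocks x B A 0).det
    rw [Matrix.det_fromBlocks₁₁]
    congr 1
    rw [Matrix.invOf_eq_nonsing_inv]
    have h1 : (0 : Matrix (Fin I.card) (Fin I.card) ℂ) - A * x⁻¹ * B
        = A * (-x⁻¹) * B := by
      rw [zero_sub, Matrix.mul_neg, Matrix.neg_mul]
    rw [h1]
    have h2 : A * (-x⁻¹) * B = Matrix.of fun α β : Fin I.card =>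
        (-x⁻¹) ((I.orderIsoOfFin rfl α : Fin n)) ((J.orderIsoOfFin h.symm β : Fin n)) := by
      ext α β
      simp [Matrix.mul_apply, hA, hB, ite_mul, mul_ite, one_mul, mul_one, zero_mul,
        mul_zero, Finset.sum_ite_eq, Finset.sum_ite_eq', -Finset.coe_orderIsoOfFin_apply]
    rw [h2]
    rfl

end MinorAux

/-- The span `V` of all minors is invariant under every transformation
`p(x) ↦ p(c + a x aᵀ)` (`a ∈ GL_n(ℂ)`, `c` symmetric), and under `p(x) ↦ det(x) p(-x⁻¹)`
(on the open set `det x ≠ 0`, the latter agrees with an element of `V`). -/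


theorem minorSpan_invariant (n : ℕ) :
    (∀ p ∈ minorSpan n, ∀ a : Matrix (Fin n) (Fin n) ℂ, IsUnit a.det →
      ∀ c : Matrix (Fin n) (Fin n) ℂ, c.IsSymm →
        (fun x => p (c + a * x * aᵀ)) ∈ minorSpan n) ∧
    (∀ p ∈ minorSpan n, ∃ q ∈ minorSpan n,
      ∀ x : Matrix (Fin n) (Fin n) ℂ, x.IsSymm → IsUnit x.det →
        x.det * p (-x⁻¹) = q x) := by

  constructor
  · intro p hp a _ c _
    have hle : minorSpan n ≤ (minorSpan n).comap
        (LinearMap.funLeft ℂ ℂ (fun x : Matrix (Fin n) (Fin n) ℂ => c + a * x * aᵀ)) := by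
      rw [show minorSpan n = Submodule.span ℂ
        {f | ∃ (I J : Finset (Fin n)) (h : I.card = J.card),
          f = fun x => fminor x I J h} from rfl, Submodule.span_le]
      rintro f ⟨I, J, h, rfl⟩
      simp only [SetLike.mem_coe, Submodule.mem_comap]
      exact MinorAux.part1gen a c I J h
    exact Submodule.mem_comap.mp (hle hp)
  · intro p hp
    refine Submodule.span_induction (p := fun f _ => ∃ q ∈ minorSpan n,
        ∀ x : Matrix (Fin n) (Fin n) ℂ, x.IsSymm → IsUnit x.det →
          x.det * f (-x⁻¹) = q x) ?_ ?_ ?_ ?_ hp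
    · rintro f ⟨I, J, h, rfl⟩
      obtain ⟨q, hq, hid⟩ := MinorAux.part2gen I J h
      exact ⟨q, hq, fun x _ hx => hid x hx⟩
    · exact ⟨0, Submodule.zero_mem _, fun x _ _ => by simp⟩
    · rintro f g _ _ ⟨qf, hqf, hf⟩ ⟨qg, hqg, hg⟩
      refine ⟨qf + qg, Submodule.add_mem _ hqf hqg, fun x hs hx => ?_⟩
      simp only [Pi.add_apply, mul_add, hf x hs hx, hg x hs hx]
    · rintro r f _ ⟨q, hq, hf⟩
      refine ⟨r • q, Submodule.smul_mem _ _ hq, fun x hs hx => ?_⟩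
      simp only [Pi.smul_apply, smul_eq_mul]
      rw [mul_left_comm, hf x hs hx]


end
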